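/- Let φ : A' → A be a morphism of layered automata over a finite alphabet Σ that preserves strong acceptance, i.e. for every state p' of A' and every infinite word w: if w is strongly accepted by p' in A' then w is strongly accepted by φ(p') in A, and if w is strongly rejected by p' in A' then w is strongly rejected by φ(p') in A. If A is consistent, then A' is consistent and the set of infinite words accepted by A' under layered acceptance equals the set of infinite words accepted by A under layered acceptance. -/
import Mathlib


open scoped Classical

noncomputable section

/-! ### Infinite words and the parity condition -/

/-- The minimal value occurring infinitely often in a sequence of priorities;
for (eventually) bounded sequences this is the `liminf`. -/
def minInfOften (pi : ℕ → ℕ) : ℕ := sInf {x : ℕ | ∀ N : ℕ, ∃ n : ℕ, N ≤ n ∧ pi n = x}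

/-- The (min-)parity acceptance condition: the liminf of the priorities is even. -/
def ParityAccept (pi : ℕ → ℕ) : Prop := Even (minInfOften pi)

/-- Prepend a finite word to an infinite word. -/
def prependW {α : Type} (u : List α) (w : ℕ → α) : ℕ → α := fun i =>
  if h : i < u.length then u.get ⟨i, h⟩ else w (i - u.length)

/-- The prefix of length `n` of an infinite word, as a list. -/
def wordPrefix {α : Type} (w : ℕ → α) (n : ℕ) : List α := List.ofFn (fun i : Fin n => w i)

/-- Drop the first `n` letters of an infinite word. -/
def wordDrop {α : Type} (w : ℕ → α) (n : ℕ) : ℕ → α := fun i => w (n + i)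

/-- The periodic infinite word `v^ω` (junk if `v = []`). -/
def perWord {α : Type} [Inhabited α] (v : List α) : ℕ → α := fun i => v.getD (i % v.length) default

/-! ### Layered automata -/

/-- A layered automaton over the alphabet `α` with `d` layers.  The (disjoint) layers
are encoded by the function `layer : Q → [1,d]`; each layer is a deterministic
transition system (partial transition function `δ`, which stays inside the layer);
`μ` sends each state of layer `x+1` to its parent in layer `x` (and is the identity
on layer `1`) and is a morphism of transition systems; layer `1` is complete, carries
the initial state, and all its states are reachable from the initial state. -/
structure Layered (Q α : Type) (d : ℕ) where
  layer : Q → ℕ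
  layer_pos : ∀ q, 1 ≤ layer q
  layer_le : ∀ q, layer q ≤ d
  δ : Q → α → Option Q
  δ_layer : ∀ q a q', δ q a = some q' → layer q' = layer q
  μ : Q → Q
  μ_layer : ∀ q, 1 < layer q → layer (μ q) + 1 = layer q
  μ_id : ∀ q, layer q = 1 → μ q = q
  μ_morph : ∀ q a q', 1 < layer q → δ q a = some q' → δ (μ q) a = some (μ q')
  init : Q
  init_layer : layer init = 1
  complete1 : ∀ q a, layer q = 1 → (δ q a).isSome = true
  reach1 : ∀ q, layer q = 1 →
    Relation.ReflTransGen (fun p p' => layer p = 1 ∧ ∃ a, δ p a = some p') init q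

namespace Layered

variable {Q R α : Type} {d d' : ℕ}

/-- The run of the (deterministic) layer transition systems on a finite word. -/
def runList (A : Layered Q α d) : Q → List α → Option Q
  | q, [] => some q
  | q, a :: u =>
    match A.δ q a with
    | some q' => runList A q' u
    | none => none

/-- `μ̂_x q`: the ancestor of `q` in layer `x` (image under the composed morphisms). -/
def muHat (A : Layered Q α d) (x : ℕ) (q : Q) : Q := (A.μ)^[A.layer q - x] q

/-- A leaf state: a state that is not in the image of any of the morphisms `μ_x`. -/
def IsLeaf (A : Layered Q α d) (q : Q) : Prop := ∀ p, 1 < A.layer p → A.μ p ≠ q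

/-- `layer(q,a)`: the largest layer `x ≤ layer q` in which `δ_x (μ̂_x q) a` is defined. -/
def layerOf (A : Layered Q α d) (q : Q) (a : α) : ℕ :=
  Nat.findGreatest (fun x => (A.δ (A.muHat x q) a).isSome = true) (A.layer q)

/-- A state `p` is an ancestor of `q`. -/
def IsAncestor (A : Layered Q α d) (p q : Q) : Prop :=
  A.layer p ≤ A.layer q ∧ A.muHat (A.layer p) q = p

/-! #### Safe languages and strong acceptance -/

/-- Membership of a finite word in the `x`-safe language of `q`. -/
def SafeFin (A : Layered Q α d) (x : ℕ) (q : Q) (u : List α) : Prop :=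
  (A.runList (A.muHat x q) u).isSome = true

/-- Membership of an infinite word in the `x`-safe language of `q`. -/
def SafeInf (A : Layered Q α d) (x : ℕ) (q : Q) (w : ℕ → α) : Prop :=
  ∀ n : ℕ, A.SafeFin x q (wordPrefix w n)

/-- `w` is strongly accepted by the state `p` (which lies in the even layer `x = layer p`):
`w` is `x`-safe from `p` and no decomposition `w = u·w'` admits a state `p'` of layer `x+1`
with a `u`-run from `p` to the parent of `p'` in `T_x` such that `w'` is `(x+1)`-safe from `p'`. -/
def StronglyAcc (A : Layered Q α d) (p : Q) (w : ℕ → α) : Prop :=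
  Even (A.layer p) ∧ A.SafeInf (A.layer p) p w ∧
  ∀ (n : ℕ) (p' : Q), A.layer p' = A.layer p + 1 →
    A.runList p (wordPrefix w n) = some (A.μ p') →
    ¬ A.SafeInf (A.layer p') p' (wordDrop w n)

/-- `w` is strongly rejected by `p` (lying in an odd layer). -/
def StronglyRej (A : Layered Q α d) (p : Q) (w : ℕ → α) : Prop :=
  Odd (A.layer p) ∧ A.SafeInf (A.layer p) p w ∧
  ∀ (n : ℕ) (p' : Q), A.layer p' = A.layer p + 1 →
    A.runList p (wordPrefix w n) = some (A.μ p') →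
    ¬ A.SafeInf (A.layer p') p' (wordDrop w n)

/-- Consistency: no two states with the same layer-1 ancestor strongly accept
resp. strongly reject a common infinite word. -/
def Consistent (A : Layered Q α d) : Prop :=
  ¬ ∃ (p p' : Q) (w : ℕ → α), A.muHat 1 p = A.muHat 1 p' ∧
      A.StronglyAcc p w ∧ A.StronglyRej p' w

/-- `w` is ultimately safe in layer `x`, for the automaton started in the
layer-1 state `q0`. -/
def UltSafeFrom (A : Layered Q α d) (q0 : Q) (x : ℕ) (w : ℕ → α) : Prop :=
  ∃ (n : ℕ) (p : Q), A.layer p = x ∧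
    A.runList q0 (wordPrefix w n) = some (A.muHat 1 p) ∧
    A.SafeInf x p (wordDrop w n)

/-- Layered acceptance from `q0`: the maximal layer in which `w` is ultimately safe is even. -/
def LayeredAcceptFrom (A : Layered Q α d) (q0 : Q) (w : ℕ → α) : Prop :=
  ∃ x : ℕ, Even x ∧ A.UltSafeFrom q0 x w ∧ ∀ y : ℕ, A.UltSafeFrom q0 y w → y ≤ x

/-- Layered rejection from `q0`: the maximal layer in which `w` is ultimately safe is odd. -/
def LayeredRejectFrom (A : Layered Q α d) (q0 : Q) (w : ℕ → α) : Prop :=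
  ∃ x : ℕ, Odd x ∧ A.UltSafeFrom q0 x w ∧ ∀ y : ℕ, A.UltSafeFrom q0 y w → y ≤ x

/-! #### The semantics automaton `⟦A⟧` (a simple-by-priorities alternating parity automaton) -/

/-- The priority of the letter `a` in the state `q` of `⟦A⟧`. -/
def semPrio (A : Layered Q α d) (q : Q) (a : α) : ℕ := A.layerOf q a

/-- The transitions of `⟦A⟧` (between leaf states): `q —a→ q'` iff, for
`x = layer(q,a)`, we have `δ_x (μ̂_x q) a = μ̂_x q'`; the transition carries priority `x`. -/
def semStep (A : Layered Q α d) (q : Q) (a : α) (q' : Q) : Prop :=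
  A.IsLeaf q' ∧ A.δ (A.muHat (A.layerOf q a) q) a = some (A.muHat (A.layerOf q a) q')

/-- Runs of `⟦A⟧` over the infinite word `w`, starting in `p`. -/
def IsSemRun (A : Layered Q α d) (w : ℕ → α) (p : Q) (ρ : ℕ → Q) : Prop :=
  ρ 0 = p ∧ ∀ i : ℕ, A.semStep (ρ i) (w i) (ρ (i + 1))

/-- The sequence of priorities produced by a run of `⟦A⟧` over `w`. -/
def runPrios (A : Layered Q α d) (w : ℕ → α) (ρ : ℕ → Q) : ℕ → ℕ :=
  fun i => A.semPrio (ρ i) (w i)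

/-- A resolver for Eve in `⟦A⟧`: given the history (the finite run so far, as a list of
(state, letter) pairs), the current state and a letter of odd priority, it picks a successor. -/
def EveResolver (A : Layered Q α d) (σ : List (Q × α) → Q → α → Q) : Prop :=
  ∀ (h : List (Q × α)) (q : Q) (a : α), Odd (A.semPrio q a) → A.semStep q a (σ h q a)

/-- A resolver for Adam in `⟦A⟧` (resolving the even-priority steps). -/
def AdamResolver (A : Layered Q α d) (τ : List (Q × α) → Q → α → Q) : Prop :=
  ∀ (h : List (Q × α)) (q : Q) (a : α), Even (A.semPrio q a) → A.semStep q a (τ h q a)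

/-- A run is consistent with the Eve-resolver `σ`: every odd-priority step follows `σ`. -/
def ConsEve (A : Layered Q α d) (σ : List (Q × α) → Q → α → Q) (w : ℕ → α) (ρ : ℕ → Q) : Prop :=
  ∀ i : ℕ, Odd (A.semPrio (ρ i) (w i)) →
    ρ (i + 1) = σ (List.ofFn fun j : Fin i => (ρ (j : ℕ), w (j : ℕ))) (ρ i) (w i)

/-- A run is consistent with the Adam-resolver `τ`: every even-priority step follows `τ`. -/
def ConsAdam (A : Layered Q α d) (τ : List (Q × α) → Q → α → Q) (w : ℕ → α) (ρ : ℕ → Q) : Prop :=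
  ∀ i : ℕ, Even (A.semPrio (ρ i) (w i)) →
    ρ (i + 1) = τ (List.ofFn fun j : Fin i => (ρ (j : ℕ), w (j : ℕ))) (ρ i) (w i)

/-- Acceptance of `w` by `⟦A⟧` from the (leaf) state `p`: Eve has a winning strategy
in the game `G(⟦A⟧,w)`, i.e. a resolver all of whose consistent runs satisfy parity. -/
def SemAccept (A : Layered Q α d) (p : Q) (w : ℕ → α) : Prop :=
  ∃ σ : List (Q × α) → Q → α → Q, A.EveResolver σ ∧
    ∀ ρ : ℕ → Q, A.IsSemRun w p ρ → A.ConsEve σ w ρ → ParityAccept (A.runPrios w ρ)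

/-- Uniform semantic determinism: leaf states with the same layer-1 ancestor
recognise the same language in `⟦A⟧`. -/
def UnifSD (A : Layered Q α d) : Prop :=
  ∀ p q : Q, A.IsLeaf p → A.IsLeaf q → A.muHat 1 p = A.muHat 1 q →
    ∀ w : ℕ → α, (A.SemAccept p w ↔ A.SemAccept q w)

/-! #### Longest suffix resolvers -/

/-- `v` is a suffix-witness to `r`: the layer of `r` has a run labelled `v` ending in `r`. -/
def suffixReaches (A : Layered Q α d) (r : Q) (v : List α) : Prop :=
  ∃ p : Q, A.layer p = A.layer r ∧ A.runList p v = some r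

/-- The length of the longest suffix `v` of `u` such that the layer of `r` has a
run labelled `v` ending in `r`. -/
def longestSuffixLen (A : Layered Q α d) (u : List α) (r : Q) : ℕ :=
  Nat.findGreatest (fun k => k ≤ u.length ∧ A.suffixReaches r (u.drop (u.length - k))) u.length

/-- A longest suffix resolver for Eve, initialised to `u0`: a valid Eve-resolver that,
at a step of odd priority `x` after having read `v`, moves to an `a`-successor `q'`
maximising the length of the longest `(x+1)`-suffix of `u0·v·a` to `μ̂_{x+1} q'`. -/
def IsLongestSuffixResolverE (A : Layered Q α d) (u0 : List α)
    (σ : List (Q × α) → Q → α → Q) : Prop :=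
  A.EveResolver σ ∧
  ∀ (h : List (Q × α)) (q : Q) (a : α), Odd (A.semPrio q a) →
    ∀ q' : Q, A.semStep q a q' →
      A.longestSuffixLen (u0 ++ h.map Prod.snd ++ [a]) (A.muHat (A.semPrio q a + 1) q') ≤
      A.longestSuffixLen (u0 ++ h.map Prod.snd ++ [a]) (A.muHat (A.semPrio q a + 1) (σ h q a))

/-- A longest suffix resolver for Adam, initialised to `u0` (symmetric, for even priorities). -/
def IsLongestSuffixResolverA (A : Layered Q α d) (u0 : List α)
    (τ : List (Q × α) → Q → α → Q) : Prop :=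
  A.AdamResolver τ ∧
  ∀ (h : List (Q × α)) (q : Q) (a : α), Even (A.semPrio q a) →
    ∀ q' : Q, A.semStep q a q' →
      A.longestSuffixLen (u0 ++ h.map Prod.snd ++ [a]) (A.muHat (A.semPrio q a + 1) q') ≤
      A.longestSuffixLen (u0 ++ h.map Prod.snd ++ [a]) (A.muHat (A.semPrio q a + 1) (τ h q a))

/-! #### The random walk on `⟦A⟧` -/

/-- The uniform step probability of the random walk of `⟦A⟧`. -/
def stepProb (A : Layered Q α d) (q : Q) (a : α) (q' : Q) : ENNReal :=
  if A.semStep q a q' then ((Nat.card {p : Q // A.semStep q a p} : ENNReal))⁻¹ else 0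

/-- `m` is the Markov measure of the random walk of `⟦A⟧` over the word `w` started at `p`:
a probability measure on `ℕ → Q` whose cylinder probabilities are the products of the
uniform step probabilities. -/
def IsWalkMeasure [MeasurableSpace Q] (A : Layered Q α d) (w : ℕ → α) (p : Q)
    (m : MeasureTheory.Measure (ℕ → Q)) : Prop :=
  MeasureTheory.IsProbabilityMeasure m ∧
  ∀ (n : ℕ) (s : Fin (n + 1) → Q),
    m {ρ : ℕ → Q | ∀ i : Fin (n + 1), ρ (i : ℕ) = s i} =
      (if s 0 = p then 1 else 0) *
        ∏ i : Fin n, A.stepProb (s i.castSucc) (w (i : ℕ)) (s i.succ)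

/-! #### Normal form, centrality, safe minimality, central sequences -/

/-- Normal form: (N1) every layer `x ≥ 2` is a union of non-trivial SCCs, and
(N2) the safe language of every child is strictly smaller than that of its parent. -/
def NormalForm (A : Layered Q α d) : Prop :=
  ∀ q : Q, 2 ≤ A.layer q →
    (∀ (u : List α) (q' : Q), A.runList q u = some q' →
      ∃ v : List α, v ≠ [] ∧ A.runList q' v = some q) ∧
    (∀ p : Q, 1 < A.layer p → A.μ p = q →
      ∃ u : List α, (A.runList q u).isSome = true ∧ A.runList p u = none)

/-- Inclusion of `x`-safe languages. -/
def SafeLE (A : Layered Q α d) (x : ℕ) (p q : Q) : Prop :=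
  (∀ u : List α, A.SafeFin x p u → A.SafeFin x q u) ∧
  (∀ w : ℕ → α, A.SafeInf x p w → A.SafeInf x q w)

/-- Centralised: siblings (same parent) whose safe languages are included,
lie in the same SCC of their layer. -/
def Centralised (A : Layered Q α d) : Prop :=
  ∀ p q : Q, 2 ≤ A.layer p → A.layer q = A.layer p →
    A.muHat (A.layer p - 1) p = A.muHat (A.layer p - 1) q →
    A.SafeLE (A.layer p) p q →
    (∃ u : List α, A.runList p u = some q) ∧ (∃ v : List α, A.runList q v = some p)

/-- `L(p) = L(q)`: all leaves above (the layer-1 ancestor of) `p` and all leaves above `q`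
recognise the same language in `⟦A⟧`. -/
def LangEq1 (A : Layered Q α d) (p q : Q) : Prop :=
  ∀ l l' : Q, A.IsLeaf l → A.IsLeaf l' → A.muHat 1 l = A.muHat 1 p →
    A.muHat 1 l' = A.muHat 1 q → ∀ w : ℕ → α, (A.SemAccept l w ↔ A.SemAccept l' w)

/-- The equivalence `p ≈_x q`: language equivalence together with equality of all
`y`-safe languages for `2 ≤ y ≤ x`. -/
def ApproxEq (A : Layered Q α d) (x : ℕ) (p q : Q) : Prop :=
  A.LangEq1 p q ∧ ∀ y : ℕ, 2 ≤ y → y ≤ x →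
    ((∀ u : List α, A.SafeFin y p u ↔ A.SafeFin y q u) ∧
     (∀ w : ℕ → α, A.SafeInf y p w ↔ A.SafeInf y q w))

/-- Safe minimality: `≈_x`-equivalent states of the same layer are equal. -/
def SafeMinimal (A : Layered Q α d) : Prop :=
  ∀ p q : Q, A.layer p = A.layer q → A.ApproxEq (A.layer p) p q → p = q

/-- `z` is a central sequence for the state `p` (of layer `x = layer p`). -/
def IsCentralSeq (A : Layered Q α d) (p : Q) (z : List α) : Prop :=
  z ≠ [] ∧ A.runList p z = some p ∧
  (∀ q : Q, A.layer q = A.layer p →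
    A.muHat (A.layer p - 1) q = A.muHat (A.layer p - 1) p →
    (A.runList q z = some p ∨ A.runList q z = none)) ∧
  (∀ q' : Q, A.layer q' = A.layer p + 1 →
    A.muHat (A.layer p - 1) q' = A.muHat (A.layer p - 1) p →
    A.runList q' z = none)

end Layered

/-! ### Morphisms of layered automata -/

/-- A morphism of layered automata. -/
structure IsLayMorphism {Q R α : Type} {d d' : ℕ} (A : Layered Q α d) (B : Layered R α d')
    (φ : Q → R) : Prop where
  map_init : φ A.init = B.init
  map_step : ∀ q a q', A.δ q a = some q' → B.δ (φ q) a = some (φ q')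
  map_anc : ∀ p q, A.IsAncestor p q → B.IsAncestor (φ p) (φ q)

/-- A strong morphism of layered automata additionally preserves non-transitions. -/
def IsStrongLayMorphism {Q R α : Type} {d d' : ℕ} (A : Layered Q α d) (B : Layered R α d')
    (φ : Q → R) : Prop :=
  IsLayMorphism A B φ ∧ ∀ q a, A.δ q a = none → B.δ (φ q) a = none

/-- An isomorphism of layered automata: a bijection on states that restricts to
isomorphisms of the layer transition systems, preserves the initial state, and
commutes with the morphisms `μ`. -/
structure IsLayIso {Q R α : Type} {d d' : ℕ} (A : Layered Q α d) (B : Layered R α d')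
    (φ : Q ≃ R) : Prop where
  map_layer : ∀ q, B.layer (φ q) = A.layer q
  map_init : φ A.init = B.init
  map_mu : ∀ q, φ (A.μ q) = B.μ (φ q)
  map_step : ∀ q a, (A.δ q a).map φ = B.δ (φ q) a

/-- `L(⟦A⟧) = L(⟦B⟧)`: the semantics automata (with any choice of initial leaf states
above the respective initial states) accept the same infinite words. -/
def SemLangEq {Q R α : Type} {d d' : ℕ} (A : Layered Q α d) (B : Layered R α d') : Prop :=
  ∀ (p : Q) (q : R), A.IsLeaf p → A.muHat 1 p = A.init → B.IsLeaf q → B.muHat 1 q = B.init →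
    ∀ w : ℕ → α, (A.SemAccept p w ↔ B.SemAccept q w)

/-! ### Deterministic parity automata -/

/-- A deterministic parity automaton over `α` with priorities in `[1,d]`. -/
structure DPA (Q α : Type) (d : ℕ) where
  init : Q
  next : Q → α → Q
  prio : Q → α → ℕ
  prio_pos : ∀ q a, 1 ≤ prio q a
  prio_le : ∀ q a, prio q a ≤ d

namespace DPA

variable {Q α : Type} {d : ℕ}

/-- The unique run of a DPA on an infinite word. -/
def run (B : DPA Q α d) (w : ℕ → α) : ℕ → Q
  | 0 => B.init
  | n + 1 => B.next (run B w n) (w n)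

/-- Acceptance by a DPA: the priorities along the unique run satisfy parity. -/
def Accepts (B : DPA Q α d) (w : ℕ → α) : Prop :=
  ParityAccept (fun i => B.prio (B.run w i) (w i))

end DPA

/-- `L` is ω-regular: recognised by some deterministic parity automaton. -/
def IsOmegaRegular {α : Type} (L : Set (ℕ → α)) : Prop :=
  ∃ (n d : ℕ) (B : DPA (Fin n) α d), ∀ w : ℕ → α, w ∈ L ↔ B.Accepts w

/-! ### Nondeterministic coBüchi automata -/

/-- A (complete) nondeterministic coBüchi automaton: transitions carry priorities in `{1,2}`. -/
structure NCA (Q α : Type) where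
  init : Q
  trans : Q → α → ℕ → Q → Prop
  prio_mem : ∀ q a x q', trans q a x q' → x = 1 ∨ x = 2
  complete : ∀ q a, ∃ x q', trans q a x q'

namespace NCA

variable {Q α : Type}

/-- Nondeterministic acceptance from the state `q`. -/
def AcceptFrom (B : NCA Q α) (q : Q) (w : ℕ → α) : Prop :=
  ∃ (ρ : ℕ → Q) (pri : ℕ → ℕ), ρ 0 = q ∧
    (∀ i : ℕ, B.trans (ρ i) (w i) (pri i) (ρ (i + 1))) ∧ ParityAccept pri

/-- Semantic determinism: every `a`-successor of `p` recognises `a⁻¹ L(p)`. -/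
def SemDet (B : NCA Q α) : Prop :=
  ∀ p a x q, B.trans p a x q →
    ∀ w : ℕ → α, (B.AcceptFrom q w ↔ B.AcceptFrom p (prependW [a] w))

/-- Safe determinism: all `a`-transitions from a state carry the same priority, and
there is at most one `a`-transition of priority `2` from each state. -/
def SafeDet (B : NCA Q α) : Prop :=
  (∀ q a x q' x' q'', B.trans q a x q' → B.trans q a x' q'' → x = x') ∧
  (∀ q a q' q'', B.trans q a 2 q' → B.trans q a 2 q'' → q' = q'')

/-- 1-saturation: priority-1 transitions go to all language-equivalent states. -/
def OneSaturated (B : NCA Q α) : Prop :=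
  ∀ q a p p', B.trans q a 1 p →
    (∀ w : ℕ → α, (B.AcceptFrom p' w ↔ B.AcceptFrom p w)) → B.trans q a 1 p'

end NCA

/-! ### Simple-by-priorities alternating parity automata (abstract) -/

/-- A simple-by-priorities alternating parity automaton: a complete transition system
over `α × [1,d]` in which all `a`-transitions from a state carry the same priority. -/
structure SPA (Q α : Type) (d : ℕ) where
  init : Q
  step : Q → α → Q → Prop
  prio : Q → α → ℕ
  prio_pos : ∀ q a, 1 ≤ prio q a
  prio_le : ∀ q a, prio q a ≤ d
  complete : ∀ q a, ∃ q', step q a q'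

/-! ### The congruence on tuples of finite words -/

/-- The data of the congruence at one level (tuples of a fixed length,
represented as reversed lists of components: the head is the last component). -/
structure CongrLevel (α : Type) where
  bot : List (List α) → Prop
  eq : List (List α) → List (List α) → Prop
  ptd : List (List α) → Prop

/-- Concatenate a finite word to the last component of a tuple
(tuples are represented as reversed lists: the head is the last component). -/
def tcat {α : Type} (t : List (List α)) (v : List α) : List (List α) :=
  match t with
  | h :: rest => (h ++ v) :: rest
  | [] => []

/-- Merge the last two components of a tuple. -/
def tmerge {α : Type} (t : List (List α)) : List (List α) :=
  match t with
  | u' :: h :: rest => (h ++ u') :: rest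
  | t' => t'

/-- The congruence data at level `n` (handling tuples of length `n+1`), defined by
recursion on the level, following the inductive definition of `≈ ⊥`, `≈` and `pointed`. -/
def congrData {α : Type} [Inhabited α] (L : Set (ℕ → α)) : ℕ → CongrLevel α
  | 0 =>
    { bot := fun _ => False
      eq := fun t s =>
        match t, s with
        | [u], [v] => ∀ w : ℕ → α, (prependW u w ∈ L ↔ prependW v w ∈ L)
        | _, _ => False
      ptd := fun _ => True }
  | n + 1 =>
    let C := congrData L n
    let bot : List (List α) → Prop := fun t =>
      match t with
      | u' :: ubar =>
        C.bot (tmerge (u' :: ubar)) ∨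
        ∀ w : List α, w ≠ [] → C.eq (tcat (tmerge (u' :: ubar)) w) ubar →
          ((prependW ubar.reverse.flatten (perWord (u' ++ w)) ∈ L) ↔ Even (n + 1))
      | [] => True
    let eq : List (List α) → List (List α) → Prop := fun t s =>
      C.eq (tmerge t) (tmerge s) ∧ ∀ v : List α, (bot (tcat t v) ↔ bot (tcat s v))
    let ptd : List (List α) → Prop := fun t =>
      match t with
      | u' :: ubar =>
        ¬ bot (u' :: ubar) ∧ C.ptd ubar ∧
        ∀ (vbar : List (List α)) (v' : List α), vbar.length = n + 1 → C.ptd vbar →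
          C.eq (tcat vbar v') ubar → ¬ bot ((v' ++ u') :: vbar) →
          eq ((v' ++ u') :: vbar) (u' :: ubar)
      | [] => False
    { bot := bot, eq := eq, ptd := ptd }

/-- `t ≈ ⊥` (for a nonempty tuple `t`, in reversed representation). -/
def TupBot {α : Type} [Inhabited α] (L : Set (ℕ → α)) (t : List (List α)) : Prop :=
  (congrData L (t.length - 1)).bot t

/-- `t ≈ s` (for nonempty tuples of the same length, in reversed representation). -/
def TupEq {α : Type} [Inhabited α] (L : Set (ℕ → α)) (t s : List (List α)) : Prop :=
  t.length = s.length ∧ (congrData L (t.length - 1)).eq t s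

/-- `t` is pointed. -/
def TupPointed {α : Type} [Inhabited α] (L : Set (ℕ → α)) (t : List (List α)) : Prop :=
  (congrData L (t.length - 1)).ptd t

/-- `cls` exhibits `A` as (a copy of) the congruence automaton `A_≈` of `L`: its states
are the `≈`-classes of pointed tuples (the layer being the tuple length), transitions
are given by concatenation in the last component, the initial state is the class of
`(ε)`, and the morphisms are given by merging the last two components. -/
structure IsCongrAut {α : Type} [Inhabited α] (L : Set (ℕ → α)) {Q : Type} {d : ℕ}
    (A : Layered Q α d) (cls : (t : List (List α)) → TupPointed L t → Q) : Prop where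
  surj : ∀ q : Q, ∃ (t : List (List α)) (ht : TupPointed L t), cls t ht = q
  cls_eq : ∀ t ht s hs, cls t ht = cls s hs ↔ TupEq L t s
  layer_eq : ∀ t ht, A.layer (cls t ht) = t.length
  init_eq : ∀ h : TupPointed L [([] : List α)], cls [([] : List α)] h = A.init
  step_some : ∀ t ht (a : α) (h' : TupPointed L (tcat t [a])),
    A.δ (cls t ht) a = some (cls (tcat t [a]) h')
  step_none : ∀ t ht (a : α), TupBot L (tcat t [a]) → A.δ (cls t ht) a = none
  mu_eq : ∀ (u' : List α) (ubar : List (List α)) (h : TupPointed L (u' :: ubar))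
    (h' : TupPointed L (tmerge (u' :: ubar))), ubar ≠ [] →
    A.μ (cls (u' :: ubar) h) = cls (tmerge (u' :: ubar)) h'

end

/-! ### Auxiliary lemmas for Statement 11 -/

namespace Layered

variable {Q Q' α : Type} {d d' : ℕ}

theorem runList_append (B : Layered Q α d) (q : Q) (u v : List α) :
    B.runList q (u ++ v) = (B.runList q u).bind (fun r => B.runList r v) := by
  induction u generalizing q with
  | nil => simp [runList]
  | cons a u ih =>
    cases hd : B.δ q a with
    | none => simp [runList, hd]
    | some r => simp [runList, hd, ih]

theorem runList_layer (B : Layered Q α d) {q q' : Q} {u : List α}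
    (h : B.runList q u = some q') : B.layer q' = B.layer q := by
  induction u generalizing q with
  | nil => simp [runList] at h; rw [h]
  | cons a u ih =>
    cases hd : B.δ q a with
    | none => simp [runList, hd] at h
    | some r =>
      have hr : B.runList r u = some q' := by simpa [runList, hd] using h
      rw [ih hr, B.δ_layer q a r hd]

theorem layer_iterate_mu (B : Layered Q α d) (q : Q) :
    ∀ k, k ≤ B.layer q - 1 → B.layer ((B.μ)^[k] q) = B.layer q - k := by
  intro k
  induction k with
  | zero => simp
  | succ k ih =>
    intro hk
    have h1 : B.layer ((B.μ)^[k] q) = B.layer q - k := ih (by omega)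
    have hq := B.layer_pos q
    have h2 : 1 < B.layer ((B.μ)^[k] q) := by omega
    rw [Function.iterate_succ_apply']
    have h3 := B.μ_layer _ h2
    omega

theorem muHat_self (B : Layered Q α d) (q : Q) : B.muHat (B.layer q) q = q := by
  simp [muHat]

theorem layer_muHat_one (B : Layered Q α d) (q : Q) : B.layer (B.muHat 1 q) = 1 := by
  have h1 := B.layer_iterate_mu q (B.layer q - 1) le_rfl
  have h2 := B.layer_pos q
  unfold muHat
  omega

theorem muHat_one_layer_one (B : Layered Q α d) {q : Q} (h : B.layer q = 1) :
    B.muHat 1 q = q := by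
  unfold muHat; rw [h]; simp

theorem delta_iterate_mu (B : Layered Q α d) {q q' : Q} {a : α}
    (h : B.δ q a = some q') :
    ∀ k, k ≤ B.layer q - 1 → B.δ ((B.μ)^[k] q) a = some ((B.μ)^[k] q') := by
  intro k
  induction k with
  | zero => simpa using h
  | succ k ih =>
    intro hk
    have hstep := ih (by omega)
    have hl : B.layer ((B.μ)^[k] q) = B.layer q - k := B.layer_iterate_mu q k (by omega)
    have h2 : 1 < B.layer ((B.μ)^[k] q) := by have := B.layer_pos q; omega
    rw [Function.iterate_succ_apply', Function.iterate_succ_apply']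
    exact B.μ_morph _ a _ h2 hstep

theorem runList_iterate_mu (B : Layered Q α d) {u : List α} :
    ∀ {q q' : Q}, B.runList q u = some q' → ∀ k, k ≤ B.layer q - 1 →
      B.runList ((B.μ)^[k] q) u = some ((B.μ)^[k] q') := by
  induction u with
  | nil =>
    intro q q' h k hk
    simp [runList] at h ⊢
    rw [h]
  | cons a u ih =>
    intro q q' h k hk
    cases hd : B.δ q a with
    | none => simp [runList, hd] at h
    | some r =>
      have hr : B.runList r u = some q' := by simpa [runList, hd] using h
      have hlr : B.layer r = B.layer q := B.δ_layer q a r hd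
      have hst := B.delta_iterate_mu hd k hk
      simp only [runList, hst]
      exact ih hr k (by omega)

theorem runList_muHat_one (B : Layered Q α d) {q q' : Q} {u : List α}
    (h : B.runList q u = some q') :
    B.runList (B.muHat 1 q) u = some (B.muHat 1 q') := by
  have hl := B.runList_layer h
  have h2 := B.runList_iterate_mu h (B.layer q - 1) le_rfl
  unfold muHat
  rw [hl]
  exact h2

theorem muHat_one_of_ancestor (B : Layered Q α d) {r q : Q} (h : B.IsAncestor r q) :
    B.muHat 1 q = B.muHat 1 r := by
  obtain ⟨hle, heq⟩ := h
  have hp := B.layer_pos r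
  unfold muHat at heq ⊢
  have harith : B.layer q - 1 = (B.layer r - 1) + (B.layer q - B.layer r) := by omega
  rw [harith, Function.iterate_add_apply, heq]

theorem isAncestor_muHat_one (B : Layered Q α d) (q : Q) :
    B.IsAncestor (B.muHat 1 q) q := by
  constructor
  · rw [B.layer_muHat_one q]; exact B.layer_pos q
  · rw [B.layer_muHat_one q]

theorem muHat_one_mu (B : Layered Q α d) {q : Q} (h : 1 < B.layer q) :
    B.muHat 1 (B.μ q) = B.muHat 1 q := by
  have hl := B.μ_layer q h
  unfold muHat
  have harith : B.layer q - 1 = (B.layer (B.μ q) - 1) + 1 := by omega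
  rw [harith, Function.iterate_add_apply, Function.iterate_one]

theorem runList_complete1 (B : Layered Q α d) {q : Q} (h : B.layer q = 1) (u : List α) :
    (B.runList q u).isSome = true := by
  induction u generalizing q with
  | nil => simp [runList]
  | cons a u ih =>
    have hc := B.complete1 q a h
    cases hd : B.δ q a with
    | none => rw [hd] at hc; simp at hc
    | some r =>
      have hr1 : B.layer r = 1 := by rw [B.δ_layer q a r hd, h]
      simp only [runList, hd]
      exact ih hr1

end Layered

section Aux11

open Layered

variable {Q Q' α : Type} {d d' : ℕ}

theorem wordPrefix_succ {α : Type} (w : ℕ → α) (m : ℕ) :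
    wordPrefix w (m + 1) = wordPrefix w m ++ [w m] := by
  unfold wordPrefix
  rw [List.ofFn_succ']
  simp [List.concat_eq_append]

theorem wordPrefix_add {α : Type} (w : ℕ → α) (n k : ℕ) :
    wordPrefix w (n + k) = wordPrefix w n ++ wordPrefix (wordDrop w n) k := by
  induction k with
  | zero => simp [wordPrefix]
  | succ k ih =>
    rw [show n + (k + 1) = (n + k) + 1 by omega, wordPrefix_succ, ih,
      wordPrefix_succ, List.append_assoc]
    simp [wordDrop]

theorem wordDrop_add {α : Type} (w : ℕ → α) (n k : ℕ) :
    wordDrop (wordDrop w n) k = wordDrop w (n + k) := by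
  funext i
  simp [wordDrop, Nat.add_assoc]

/-- The common core of strong acceptance and strong rejection. -/
def StrongCore (B : Layered Q α d) (p : Q) (w : ℕ → α) : Prop :=
  B.SafeInf (B.layer p) p w ∧
  ∀ (n : ℕ) (p' : Q), B.layer p' = B.layer p + 1 →
    B.runList p (wordPrefix w n) = some (B.μ p') →
    ¬ B.SafeInf (B.layer p') p' (wordDrop w n)

theorem stronglyAcc_iff (B : Layered Q α d) (p : Q) (w : ℕ → α) :
    B.StronglyAcc p w ↔ Even (B.layer p) ∧ StrongCore B p w := Iff.rfl

theorem stronglyRej_iff (B : Layered Q α d) (p : Q) (w : ℕ → α) :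
    B.StronglyRej p w ↔ Odd (B.layer p) ∧ StrongCore B p w := Iff.rfl

theorem strongCore_shift (B : Layered Q α d) {p : Q} {w : ℕ → α}
    (hc : StrongCore B p w) (m : ℕ) :
    ∃ p₂ : Q, B.runList p (wordPrefix w m) = some p₂ ∧ B.layer p₂ = B.layer p ∧
      StrongCore B p₂ (wordDrop w m) := by
  have hsome : (B.runList p (wordPrefix w m)).isSome = true := by
    have := hc.1 m
    unfold SafeFin at this
    rwa [B.muHat_self p] at this
  obtain ⟨p₂, hp₂⟩ := Option.isSome_iff_exists.mp hsome
  have hl : B.layer p₂ = B.layer p := B.runList_layer hp₂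
  refine ⟨p₂, hp₂, hl, ?_, ?_⟩
  · -- safety
    intro n
    unfold SafeFin
    rw [B.muHat_self p₂]
    have hsn := hc.1 (m + n)
    unfold SafeFin at hsn
    rw [B.muHat_self p, wordPrefix_add, B.runList_append, hp₂] at hsn
    simpa using hsn
  · -- no escape
    intro n p' hl' hrun hsafe
    have hl'' : B.layer p' = B.layer p + 1 := by rw [hl', hl]
    have hrun2 : B.runList p (wordPrefix w (m + n)) = some (B.μ p') := by
      rw [wordPrefix_add, B.runList_append, hp₂]
      exact hrun
    exact hc.2 (m + n) p' hl'' hrun2 (by rwa [← wordDrop_add])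

theorem exists_max_strong (B : Layered Q α d) (w : ℕ → α) :
    ∃ (x n : ℕ) (p : Q), B.layer p = x ∧
      B.runList B.init (wordPrefix w n) = some (B.muHat 1 p) ∧
      StrongCore B p (wordDrop w n) ∧ B.UltSafeFrom B.init x w ∧
      ∀ y, B.UltSafeFrom B.init y w → y ≤ x := by
  classical
  have hd1 : 1 ≤ d := le_trans (B.layer_pos B.init) (B.layer_le B.init)
  have hult1 : B.UltSafeFrom B.init 1 w := by
    refine ⟨0, B.init, B.init_layer, ?_, ?_⟩
    · rw [B.muHat_one_layer_one B.init_layer]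
      simp [wordPrefix, Layered.runList]
    · intro n
      unfold Layered.SafeFin
      rw [B.muHat_one_layer_one B.init_layer]
      exact B.runList_complete1 B.init_layer _
  have hbound : ∀ y, B.UltSafeFrom B.init y w → y ≤ d := by
    rintro y ⟨n, p, hlp, -, -⟩
    rw [← hlp]; exact B.layer_le p
  set x := Nat.findGreatest (fun y => B.UltSafeFrom B.init y w) d with hxdef
  have hx : B.UltSafeFrom B.init x w :=
    Nat.findGreatest_spec (P := fun y => B.UltSafeFrom B.init y w) hd1 hult1
  have hmax : ∀ y, B.UltSafeFrom B.init y w → y ≤ x := fun y hy =>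
    Nat.le_findGreatest (P := fun y => B.UltSafeFrom B.init y w) (hbound y hy) hy
  obtain ⟨n, p, hlp, hrun, hsafe⟩ := hx
  refine ⟨x, n, p, hlp, hrun, ⟨?_, ?_⟩, ⟨n, p, hlp, hrun, hsafe⟩, hmax⟩
  · rw [hlp]; exact hsafe
  · intro n' p' hl' hrun' hsafe'
    have hlp' : B.layer p' = x + 1 := by rw [hl', hlp]
    have hpos : 1 < B.layer p' := by have := B.layer_pos p; omega
    have hproj := B.runList_muHat_one hrun'
    have hmu : B.muHat 1 (B.μ p') = B.muHat 1 p' := B.muHat_one_mu hpos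
    have hult : B.UltSafeFrom B.init (x + 1) w := by
      refine ⟨n + n', p', hlp', ?_, ?_⟩
      · rw [wordPrefix_add, B.runList_append, hrun]
        simp only [Option.bind_some]
        rw [hproj, hmu]
      · rw [← wordDrop_add]
        rwa [hlp'] at hsafe'
    have := hmax (x + 1) hult
    omega

theorem accept_iff_even_max (B : Layered Q α d) (w : ℕ → α) {x : ℕ}
    (hx : B.UltSafeFrom B.init x w) (hmax : ∀ y, B.UltSafeFrom B.init y w → y ≤ x) :
    (B.LayeredAcceptFrom B.init w ↔ Even x) := by
  constructor
  · rintro ⟨x', he, hu, hm⟩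
    have hxx : x' = x := le_antisymm (hmax x' hu) (hm x hx)
    exact hxx ▸ he
  · intro he; exact ⟨x, he, hx, hmax⟩

theorem runList_map {A' : Layered Q' α d'} {A : Layered Q α d} {φ : Q' → Q}
    (hφ : IsLayMorphism A' A φ) {q q' : Q'} {u : List α}
    (h : A'.runList q u = some q') : A.runList (φ q) u = some (φ q') := by
  induction u generalizing q with
  | nil => simp [Layered.runList] at h ⊢; rw [h]
  | cons a u ih =>
    cases hd : A'.δ q a with
    | none => simp [Layered.runList, hd] at h
    | some r =>
      have hr : A'.runList r u = some q' := by simpa [Layered.runList, hd] using h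
      have := hφ.map_step q a r hd
      simp only [Layered.runList, this]
      exact ih hr

/-- Two reachable states strongly accepting resp. rejecting suffixes of the same word
contradict consistency. -/
theorem no_acc_rej (A : Layered Q α d) (hA : A.Consistent) {w : ℕ → α}
    {pa pr : Q} {na nr : ℕ}
    (hra : A.runList A.init (wordPrefix w na) = some (A.muHat 1 pa))
    (ha : A.StronglyAcc pa (wordDrop w na))
    (hrr : A.runList A.init (wordPrefix w nr) = some (A.muHat 1 pr))
    (hr : A.StronglyRej pr (wordDrop w nr)) : False := by
  set N := max na nr with hN
  have hna : na + (N - na) = N := by omega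
  have hnr : nr + (N - nr) = N := by omega
  obtain ⟨pa₂, hpa₂run, hpa₂l, hpa₂core⟩ := strongCore_shift A ha.2 (N - na)
  obtain ⟨pr₂, hpr₂run, hpr₂l, hpr₂core⟩ := strongCore_shift A hr.2 (N - nr)
  have hruna : A.runList A.init (wordPrefix w N) = some (A.muHat 1 pa₂) := by
    rw [← hna, wordPrefix_add, A.runList_append, hra]
    simp only [Option.bind_some]
    exact A.runList_muHat_one hpa₂run
  have hrunr : A.runList A.init (wordPrefix w N) = some (A.muHat 1 pr₂) := by
    rw [← hnr, wordPrefix_add, A.runList_append, hrr]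
    simp only [Option.bind_some]
    exact A.runList_muHat_one hpr₂run
  have heq : A.muHat 1 pa₂ = A.muHat 1 pr₂ := by
    have := hruna.symm.trans hrunr
    exact Option.some.inj this
  refine hA ⟨pa₂, pr₂, wordDrop w N, heq, ?_, ?_⟩
  · refine ⟨by rw [hpa₂l]; exact ha.1, ?_⟩
    rw [← hna, ← wordDrop_add]
    exact hpa₂core
  · refine ⟨by rw [hpr₂l]; exact hr.1, ?_⟩
    rw [← hnr, ← wordDrop_add]
    exact hpr₂core

end Aux11

/-- If `φ : A' → A` is a morphism of layered automata that preserves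
strong acceptance and `A` is consistent, then `A'` is consistent and `A'` and `A` accept
the same infinite words under layered acceptance. -/
theorem statement_11 {Q' Q α : Type} [Fintype Q'] [Fintype Q] [Fintype α] [Nonempty α]
    {d' d : ℕ}
    (A' : Layered Q' α d') (A : Layered Q α d) (φ : Q' → Q)
    (hφ : IsLayMorphism A' A φ)
    (hpres : ∀ (p : Q') (w : ℕ → α),
      (A'.StronglyAcc p w → A.StronglyAcc (φ p) w) ∧
      (A'.StronglyRej p w → A.StronglyRej (φ p) w))
    (hA : A.Consistent) :
    A'.Consistent ∧
      ∀ w : ℕ → α, (A'.LayeredAcceptFrom A'.init w ↔ A.LayeredAcceptFrom A.init w) := by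
  have hcons' : A'.Consistent := by
    rintro ⟨p, p', w, h1, hacc, hrej⟩
    refine hA ⟨φ p, φ p', w, ?_, (hpres p w).1 hacc, (hpres p' w).2 hrej⟩
    have e1 : A.muHat 1 (φ p) = A.muHat 1 (φ (A'.muHat 1 p)) :=
      A.muHat_one_of_ancestor (hφ.map_anc _ _ (A'.isAncestor_muHat_one p))
    have e2 : A.muHat 1 (φ p') = A.muHat 1 (φ (A'.muHat 1 p')) :=
      A.muHat_one_of_ancestor (hφ.map_anc _ _ (A'.isAncestor_muHat_one p'))
    rw [e1, e2, h1]
  refine ⟨hcons', fun w => ?_⟩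
  obtain ⟨x', n', p', hlp', hrun', hcore', hult', hmax'⟩ := exists_max_strong A' w
  obtain ⟨x, n, p, hlp, hrun, hcore, hult, hmax⟩ := exists_max_strong A w
  have hrunφ : A.runList A.init (wordPrefix w n') = some (φ (A'.muHat 1 p')) := by
    have h := runList_map hφ hrun'
    rwa [hφ.map_init] at h
  have hl1 : A.layer (φ (A'.muHat 1 p')) = 1 := by
    rw [A.runList_layer hrunφ, A.init_layer]
  have hmh : A.muHat 1 (φ p') = φ (A'.muHat 1 p') := by
    rw [A.muHat_one_of_ancestor (hφ.map_anc _ _ (A'.isAncestor_muHat_one p')),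
      A.muHat_one_layer_one hl1]
  have hrunφ' : A.runList A.init (wordPrefix w n') = some (A.muHat 1 (φ p')) := by
    rw [hmh]; exact hrunφ
  have hparity : (Even x' ↔ Even x) := by
    constructor
    · intro he
      by_contra ho
      have hox : Odd x := Nat.not_even_iff_odd.mp ho
      have hacc : A.StronglyAcc (φ p') (wordDrop w n') :=
        (hpres p' (wordDrop w n')).1
          ((stronglyAcc_iff _ _ _).mpr ⟨by rw [hlp']; exact he, hcore'⟩)
      have hrej : A.StronglyRej p (wordDrop w n) :=
        (stronglyRej_iff _ _ _).mpr ⟨by rw [hlp]; exact hox, hcore⟩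
      exact no_acc_rej A hA hrunφ' hacc hrun hrej
    · intro he
      by_contra ho
      have hox' : Odd x' := Nat.not_even_iff_odd.mp ho
      have hrejA : A.StronglyRej (φ p') (wordDrop w n') :=
        (hpres p' (wordDrop w n')).2
          ((stronglyRej_iff _ _ _).mpr ⟨by rw [hlp']; exact hox', hcore'⟩)
      have haccA : A.StronglyAcc p (wordDrop w n) :=
        (stronglyAcc_iff _ _ _).mpr ⟨by rw [hlp]; exact he, hcore⟩
      exact no_acc_rej A hA hrun haccA hrunφ' hrejA
  rw [accept_iff_even_max A' w hult' hmax', accept_iff_even_max A w hult hmax]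
  exact hparity
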